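/- Define, for x > 0, R⁽¹⁾(x) = e^{x}(e^{2x} − x − 1) and R⁽²⁾(x) = ( e^{x}(e^{x} − x − 1) + (e^{x} − 1) )·(e^{x} − 1). Then R⁽¹⁾(x) > 0 and R⁽²⁾(x) > 0 for all x > 0, and the ratio h(x) = R⁽²⁾(x)/R⁽¹⁾(x) is strictly monotone increasing and strictly concave on (0,∞), with lim_{x→0+} h(x) = 0 and lim_{x→∞} h(x) = 1. -/

import Mathlib

set_option maxHeartbeats 1600000


open Real Filter

/-- `R⁽¹⁾(x) = e^x(e^{2x} − x − 1)`. -/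
noncomputable def Rone (x : ℝ) : ℝ := exp x * (exp (2 * x) - x - 1)

/-- `R⁽²⁾(x) = (e^x(e^x − x − 1) + (e^x − 1))·(e^x − 1)`. -/
noncomputable def Rtwo (x : ℝ) : ℝ :=
  (exp x * (exp x - x - 1) + (exp x - 1)) * (exp x - 1)

namespace RatioAux

/-! ### Positivity certificates (generated, all coefficients nonnegative) -/

lemma keyA (a b : ℝ) : (0:ℝ) <
      (2486/81 : ℝ) +
      (1996/27 : ℝ) * (b ^ 2) ^ 1 +
      (226/3 : ℝ) * (b ^ 2) ^ 2 +
      (100/3 : ℝ) * (b ^ 2) ^ 3 +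
      (5 : ℝ) * (b ^ 2) ^ 4 +
      (121012/729 : ℝ) * (a ^ 2) ^ 1 +
      (7066/27 : ℝ) * (a ^ 2) ^ 1 * (b ^ 2) ^ 1 +
      (3928/27 : ℝ) * (a ^ 2) ^ 1 * (b ^ 2) ^ 2 +
      (982/27 : ℝ) * (a ^ 2) ^ 1 * (b ^ 2) ^ 3 +
      (18 : ℝ) * (a ^ 2) ^ 1 * (b ^ 2) ^ 4 +
      (8 : ℝ) * (a ^ 2) ^ 1 * (b ^ 2) ^ 5 +
      (1 : ℝ) * (a ^ 2) ^ 1 * (b ^ 2) ^ 6 +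
      (8113/18 : ℝ) * (a ^ 2) ^ 2 +
      (15377/27 : ℝ) * (a ^ 2) ^ 2 * (b ^ 2) ^ 1 +
      (6899/18 : ℝ) * (a ^ 2) ^ 2 * (b ^ 2) ^ 2 +
      (256 : ℝ) * (a ^ 2) ^ 2 * (b ^ 2) ^ 3 +
      (106 : ℝ) * (a ^ 2) ^ 2 * (b ^ 2) ^ 4 +
      (15 : ℝ) * (a ^ 2) ^ 2 * (b ^ 2) ^ 5 +
      (76127/81 : ℝ) * (a ^ 2) ^ 3 +
      (73891/54 : ℝ) * (a ^ 2) ^ 3 * (b ^ 2) ^ 1 +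
      (10996/9 : ℝ) * (a ^ 2) ^ 3 * (b ^ 2) ^ 2 +
      (1906/3 : ℝ) * (a ^ 2) ^ 3 * (b ^ 2) ^ 3 +
      (535/4 : ℝ) * (a ^ 2) ^ 3 * (b ^ 2) ^ 4 +
      (6 : ℝ) * (a ^ 2) ^ 3 * (b ^ 2) ^ 5 +
      (2295197/1296 : ℝ) * (a ^ 2) ^ 4 +
      (234499/81 : ℝ) * (a ^ 2) ^ 4 * (b ^ 2) ^ 1 +
      (60242/27 : ℝ) * (a ^ 2) ^ 4 * (b ^ 2) ^ 2 +
      (1497/2 : ℝ) * (a ^ 2) ^ 4 * (b ^ 2) ^ 3 +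
      (245/3 : ℝ) * (a ^ 2) ^ 4 * (b ^ 2) ^ 4 +
      (1 : ℝ) * (a ^ 2) ^ 4 * (b ^ 2) ^ 5 +
      (1864331/648 : ℝ) * (a ^ 2) ^ 5 +
      (117892/27 : ℝ) * (a ^ 2) ^ 5 * (b ^ 2) ^ 1 +
      (40031/16 : ℝ) * (a ^ 2) ^ 5 * (b ^ 2) ^ 2 +
      (1577/3 : ℝ) * (a ^ 2) ^ 5 * (b ^ 2) ^ 3 +
      (55/2 : ℝ) * (a ^ 2) ^ 5 * (b ^ 2) ^ 4 +
      (2422355/648 : ℝ) * (a ^ 2) ^ 6 +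
      (2016757/432 : ℝ) * (a ^ 2) ^ 6 * (b ^ 2) ^ 1 +
      (5671/3 : ℝ) * (a ^ 2) ^ 6 * (b ^ 2) ^ 2 +
      (1435/6 : ℝ) * (a ^ 2) ^ 6 * (b ^ 2) ^ 3 +
      (5 : ℝ) * (a ^ 2) ^ 6 * (b ^ 2) ^ 4 +
      (58980619/15552 : ℝ) * (a ^ 2) ^ 7 +
      (2374643/648 : ℝ) * (a ^ 2) ^ 7 * (b ^ 2) ^ 1 +
      (4055/4 : ℝ) * (a ^ 2) ^ 7 * (b ^ 2) ^ 2 +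
      (650/9 : ℝ) * (a ^ 2) ^ 7 * (b ^ 2) ^ 3 +
      (5/12 : ℝ) * (a ^ 2) ^ 7 * (b ^ 2) ^ 4 +
      (3912649/1296 : ℝ) * (a ^ 2) ^ 8 +
      (104359/48 : ℝ) * (a ^ 2) ^ 8 * (b ^ 2) ^ 1 +
      (2371/6 : ℝ) * (a ^ 2) ^ 8 * (b ^ 2) ^ 2 +
      (85/6 : ℝ) * (a ^ 2) ^ 8 * (b ^ 2) ^ 3 +
      (1648705/864 : ℝ) * (a ^ 2) ^ 9 +
      (26791/27 : ℝ) * (a ^ 2) ^ 9 * (b ^ 2) ^ 1 +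
      (2695/24 : ℝ) * (a ^ 2) ^ 9 * (b ^ 2) ^ 2 +
      (5/3 : ℝ) * (a ^ 2) ^ 9 * (b ^ 2) ^ 3 +
      (11284373/11664 : ℝ) * (a ^ 2) ^ 10 +
      (2807/8 : ℝ) * (a ^ 2) ^ 10 * (b ^ 2) ^ 1 +
      (1235/54 : ℝ) * (a ^ 2) ^ 10 * (b ^ 2) ^ 2 +
      (5/54 : ℝ) * (a ^ 2) ^ 10 * (b ^ 2) ^ 3 +
      (683933/1728 : ℝ) * (a ^ 2) ^ 11 +
      (10355/108 : ℝ) * (a ^ 2) ^ 11 * (b ^ 2) ^ 1 +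
      (115/36 : ℝ) * (a ^ 2) ^ 11 * (b ^ 2) ^ 2 +
      (169523/1296 : ℝ) * (a ^ 2) ^ 12 +
      (4315/216 : ℝ) * (a ^ 2) ^ 12 * (b ^ 2) ^ 1 +
      (5/18 : ℝ) * (a ^ 2) ^ 12 * (b ^ 2) ^ 2 +
      (1669/48 : ℝ) * (a ^ 2) ^ 13 +
      (250/81 : ℝ) * (a ^ 2) ^ 13 * (b ^ 2) ^ 1 +
      (5/432 : ℝ) * (a ^ 2) ^ 13 * (b ^ 2) ^ 2 +
      (2383/324 : ℝ) * (a ^ 2) ^ 14 +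
      (145/432 : ℝ) * (a ^ 2) ^ 14 * (b ^ 2) ^ 1 +
      (6295/5184 : ℝ) * (a ^ 2) ^ 15 +
      (5/216 : ℝ) * (a ^ 2) ^ 15 * (b ^ 2) ^ 1 +
      (589/3888 : ℝ) * (a ^ 2) ^ 16 +
      (1/1296 : ℝ) * (a ^ 2) ^ 16 * (b ^ 2) ^ 1 +
      (35/2592 : ℝ) * (a ^ 2) ^ 17 +
      (1/1296 : ℝ) * (a ^ 2) ^ 18 +
      (1/46656 : ℝ) * (a ^ 2) ^ 19 := by positivity

lemma keyB (d c : ℝ) : (0:ℝ) ≤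
      (20 : ℝ) * (c ^ 2) ^ 3 +
      (18 : ℝ) * (c ^ 2) ^ 4 +
      (2 : ℝ) * (c ^ 2) ^ 5 +
      (36 : ℝ) * (d ^ 2) ^ 1 * (c ^ 2) ^ 2 +
      (36 : ℝ) * (d ^ 2) ^ 1 * (c ^ 2) ^ 3 +
      (1 : ℝ) * (d ^ 2) ^ 1 * (c ^ 2) ^ 6 +
      (18 : ℝ) * (d ^ 2) ^ 2 * (c ^ 2) ^ 1 +
      (45 : ℝ) * (d ^ 2) ^ 2 * (c ^ 2) ^ 2 +
      (3 : ℝ) * (d ^ 2) ^ 2 * (c ^ 2) ^ 5 +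
      (32 : ℝ) * (d ^ 2) ^ 3 * (c ^ 2) ^ 1 +
      (19 : ℝ) * (d ^ 2) ^ 3 * (c ^ 2) ^ 2 +
      (2 : ℝ) * (d ^ 2) ^ 3 * (c ^ 2) ^ 5 +
      (8 : ℝ) * (d ^ 2) ^ 4 +
      (26 : ℝ) * (d ^ 2) ^ 4 * (c ^ 2) ^ 1 +
      (5 : ℝ) * (d ^ 2) ^ 4 * (c ^ 2) ^ 4 +
      (3/4 : ℝ) * (d ^ 2) ^ 4 * (c ^ 2) ^ 5 +
      (10 : ℝ) * (d ^ 2) ^ 5 +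
      (8 : ℝ) * (d ^ 2) ^ 5 * (c ^ 2) ^ 1 +
      (55/12 : ℝ) * (d ^ 2) ^ 5 * (c ^ 2) ^ 4 +
      (1/4 : ℝ) * (d ^ 2) ^ 5 * (c ^ 2) ^ 5 +
      (22/3 : ℝ) * (d ^ 2) ^ 6 +
      (133/18 : ℝ) * (d ^ 2) ^ 6 * (c ^ 2) ^ 3 +
      (65/24 : ℝ) * (d ^ 2) ^ 6 * (c ^ 2) ^ 4 +
      (35/12 : ℝ) * (d ^ 2) ^ 7 +
      (7/4 : ℝ) * (d ^ 2) ^ 7 * (c ^ 2) ^ 2 +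
      (65/9 : ℝ) * (d ^ 2) ^ 7 * (c ^ 2) ^ 3 +
      (5/6 : ℝ) * (d ^ 2) ^ 7 * (c ^ 2) ^ 4 +
      (1/24 : ℝ) * (d ^ 2) ^ 8 +
      (169/24 : ℝ) * (d ^ 2) ^ 8 * (c ^ 2) ^ 2 +
      (595/144 : ℝ) * (d ^ 2) ^ 8 * (c ^ 2) ^ 3 +
      (35/192 : ℝ) * (d ^ 2) ^ 8 * (c ^ 2) ^ 4 +
      (95/48 : ℝ) * (d ^ 2) ^ 9 * (c ^ 2) ^ 1 +
      (5561/864 : ℝ) * (d ^ 2) ^ 9 * (c ^ 2) ^ 2 +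
      (355/216 : ℝ) * (d ^ 2) ^ 9 * (c ^ 2) ^ 3 +
      (5/192 : ℝ) * (d ^ 2) ^ 9 * (c ^ 2) ^ 4 +
      (53/576 : ℝ) * (d ^ 2) ^ 10 +
      (15/4 : ℝ) * (d ^ 2) ^ 10 * (c ^ 2) ^ 1 +
      (413/108 : ℝ) * (d ^ 2) ^ 10 * (c ^ 2) ^ 2 +
      (425/864 : ℝ) * (d ^ 2) ^ 10 * (c ^ 2) ^ 3 +
      (1237/1728 : ℝ) * (d ^ 2) ^ 11 +
      (2773/864 : ℝ) * (d ^ 2) ^ 11 * (c ^ 2) ^ 1 +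
      (245/144 : ℝ) * (d ^ 2) ^ 11 * (c ^ 2) ^ 2 +
      (5/48 : ℝ) * (d ^ 2) ^ 11 * (c ^ 2) ^ 3 +
      (3037/3456 : ℝ) * (d ^ 2) ^ 12 +
      (10081/5184 : ℝ) * (d ^ 2) ^ 12 * (c ^ 2) ^ 1 +
      (1025/1728 : ℝ) * (d ^ 2) ^ 12 * (c ^ 2) ^ 2 +
      (55/3456 : ℝ) * (d ^ 2) ^ 12 * (c ^ 2) ^ 3 +
      (301/432 : ℝ) * (d ^ 2) ^ 13 +
      (3193/3456 : ℝ) * (d ^ 2) ^ 13 * (c ^ 2) ^ 1 +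
      (565/3456 : ℝ) * (d ^ 2) ^ 13 * (c ^ 2) ^ 2 +
      (5/3456 : ℝ) * (d ^ 2) ^ 13 * (c ^ 2) ^ 3 +
      (1097/2592 : ℝ) * (d ^ 2) ^ 14 +
      (3703/10368 : ℝ) * (d ^ 2) ^ 14 * (c ^ 2) ^ 1 +
      (245/6912 : ℝ) * (d ^ 2) ^ 14 * (c ^ 2) ^ 2 +
      (13027/62208 : ℝ) * (d ^ 2) ^ 15 +
      (197/1728 : ℝ) * (d ^ 2) ^ 15 * (c ^ 2) ^ 1 +
      (5/864 : ℝ) * (d ^ 2) ^ 15 * (c ^ 2) ^ 2 +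
      (43205/497664 : ℝ) * (d ^ 2) ^ 16 +
      (4993/165888 : ℝ) * (d ^ 2) ^ 16 * (c ^ 2) ^ 1 +
      (25/36864 : ℝ) * (d ^ 2) ^ 16 * (c ^ 2) ^ 2 +
      (30425/995328 : ℝ) * (d ^ 2) ^ 17 +
      (5/768 : ℝ) * (d ^ 2) ^ 17 * (c ^ 2) ^ 1 +
      (5/110592 : ℝ) * (d ^ 2) ^ 17 * (c ^ 2) ^ 2 +
      (13711/1492992 : ℝ) * (d ^ 2) ^ 18 +
      (125/110592 : ℝ) * (d ^ 2) ^ 18 * (c ^ 2) ^ 1 +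
      (3509/1492992 : ℝ) * (d ^ 2) ^ 19 +
      (25/165888 : ℝ) * (d ^ 2) ^ 19 * (c ^ 2) ^ 1 +
      (253/497664 : ℝ) * (d ^ 2) ^ 20 +
      (19/1327104 : ℝ) * (d ^ 2) ^ 20 * (c ^ 2) ^ 1 +
      (1093/11943936 : ℝ) * (d ^ 2) ^ 21 +
      (1/1327104 : ℝ) * (d ^ 2) ^ 21 * (c ^ 2) ^ 1 +
      (319/23887872 : ℝ) * (d ^ 2) ^ 22 +
      (1/663552 : ℝ) * (d ^ 2) ^ 23 +
      (23/191102976 : ℝ) * (d ^ 2) ^ 24 +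
      (1/191102976 : ℝ) * (d ^ 2) ^ 25 := by positivity

/-! ### Taylor bounds for `exp` -/

lemma exp_lb3 {x : ℝ} (hx : 0 ≤ x) : 1 + x + x ^ 2 / 2 + x ^ 3 / 6 ≤ exp x := by
  have h := Real.sum_le_exp_of_nonneg hx 4
  have : ∑ i ∈ Finset.range 4, x ^ i / i.factorial
      = 1 + x + x ^ 2 / 2 + x ^ 3 / 6 := by
    norm_num [Finset.sum_range_succ, Nat.factorial]
  linarith [this ▸ h]

lemma exp_lb4 {x : ℝ} (hx : 0 ≤ x) :
    1 + x + x ^ 2 / 2 + x ^ 3 / 6 + x ^ 4 / 24 ≤ exp x := by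
  have h := Real.sum_le_exp_of_nonneg hx 5
  have : ∑ i ∈ Finset.range 5, x ^ i / i.factorial
      = 1 + x + x ^ 2 / 2 + x ^ 3 / 6 + x ^ 4 / 24 := by
    norm_num [Finset.sum_range_succ, Nat.factorial]
  linarith [this ▸ h]

lemma exp_ub4 {x : ℝ} (hx : 0 ≤ x) (hx1 : x ≤ 1) :
    exp x ≤ 1 + x + x ^ 2 / 2 + x ^ 3 / 6 + x ^ 4 / 24 + x ^ 5 / 100 := by
  have habs : |x| ≤ 1 := by rw [abs_of_nonneg hx]; exact hx1
  have h := Real.exp_bound habs (n := 5) (by norm_num)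
  have hs : ∑ m ∈ Finset.range 5, x ^ m / m.factorial
      = 1 + x + x ^ 2 / 2 + x ^ 3 / 6 + x ^ 4 / 24 := by
    norm_num [Finset.sum_range_succ, Nat.factorial]
  rw [hs, abs_of_nonneg hx] at h
  have h' := (abs_le.mp h).2
  have h6 : ((Nat.succ 5 : ℝ) / ((Nat.factorial 5 : ℝ) * (5:ℕ))) = 1/100 := by
    norm_num [Nat.factorial]
  rw [h6] at h'
  linarith

lemma pow_bound {x u : ℝ} (hx0 : 0 ≤ x) (hx1 : x ≤ 1) (hu0 : 0 ≤ u)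
    (hu : u ≤ x ^ 5 / 100) (a b : ℕ) (hb : 1 ≤ b) :
    x ^ a * u ^ b ≤ x ^ 3 / 100 ^ b := by
  have h100 : (0:ℝ) < 100 ^ b := by positivity
  calc x ^ a * u ^ b ≤ 1 * u ^ b := by
        apply mul_le_mul_of_nonneg_right _ (pow_nonneg hu0 b)
        exact pow_le_one₀ hx0 hx1
    _ = u ^ b := one_mul _
    _ ≤ (x ^ 5 / 100) ^ b := pow_le_pow_left₀ hu0 hu b
    _ = x ^ (5 * b) / 100 ^ b := by rw [div_pow, pow_mul]
    _ ≤ x ^ 3 / 100 ^ b := by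
        exact (div_le_div_iff_of_pos_right h100).mpr
          (pow_le_pow_of_le_one hx0 hx1 (by omega))

/-! ### positivity of `Rone`, `Rtwo` -/

lemma Rone_pos {x : ℝ} (hx : 0 < x) : 0 < Rone x := by
  have h1 : 1 + 2 * x ≤ exp (2 * x) := by
    have := Real.add_one_le_exp (2 * x); linarith
  have := exp_pos x
  have : (0:ℝ) < exp (2 * x) - x - 1 := by linarith
  exact mul_pos (exp_pos x) this

lemma Rtwo_pos {x : ℝ} (hx : 0 < x) : 0 < Rtwo x := by
  have h1 : x + 1 < exp x := by
    have := Real.add_one_lt_exp (ne_of_gt hx); linarith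
  have h2 : (0:ℝ) < exp x - 1 := by linarith
  have h3 : (0:ℝ) < exp x - x - 1 := by linarith
  have := exp_pos x
  apply mul_pos _ h2
  nlinarith

/-! ### The polynomial `Q1` and its positivity -/

lemma Q1_pos {x : ℝ} (hx : 0 < x) :
    0 < x * exp x ^ 4 + (2 - 4 * x) * exp x ^ 3 + (x ^ 2 + 2 * x - 2) * exp x ^ 2
      - 2 * exp x + (x + 2) := by
  have hs : 0 ≤ exp x - 1 - x := by
    have := Real.add_one_le_exp x; linarith
  obtain ⟨s, hs0, hsx⟩ : ∃ s : ℝ, 0 ≤ s ∧ exp x = 1 + x + s :=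
    ⟨exp x - 1 - x, hs, by ring⟩
  rw [hsx]
  nlinarith [sq_nonneg x, sq_nonneg s, mul_nonneg hs0 hx.le, hx.le, hs0,
    mul_nonneg (mul_nonneg hs0 hs0) hs0, mul_nonneg (mul_nonneg hx.le hx.le) hx.le,
    mul_nonneg (mul_nonneg hs0 hs0) hx.le, mul_nonneg (mul_nonneg hx.le hx.le) hs0,
    mul_nonneg (mul_nonneg (mul_nonneg hs0 hs0) hs0) hx.le,
    mul_nonneg (mul_nonneg (mul_nonneg hx.le hx.le) hx.le) hs0,
    mul_nonneg (mul_nonneg (mul_nonneg hx.le hx.le) hx.le) (mul_nonneg hx.le hx.le),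
    mul_nonneg (mul_nonneg (mul_nonneg hs0 hs0) hs0) (mul_nonneg hs0 hx.le),
    mul_nonneg (mul_nonneg (mul_nonneg hx.le hx.le) (mul_nonneg hx.le hx.le)) hs0,
    mul_nonneg (mul_nonneg (mul_nonneg hs0 hs0) (mul_nonneg hs0 hs0)) hx.le,
    mul_nonneg (mul_nonneg (mul_nonneg hx.le hx.le) hs0) hs0]

/-! ### The polynomial `Q2` and its negativity -/

lemma Q2_neg {x : ℝ} (hx : 0 < x) :
    (5 + 4 * x + x ^ 2) - 4 * exp x + (-13 - 5 * x - 3 * x ^ 2 - x ^ 3) * exp x ^ 2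
      + (12 + 8 * x ^ 2) * exp x ^ 3 + (7 - 6 * x - 6 * x ^ 2) * exp x ^ 4
      + (-8 + 8 * x) * exp x ^ 5 + (1 - x) * exp x ^ 6 < 0 := by
  rcases le_or_gt 1 x with hx1 | hx1
  · -- regime x ≥ 1
    obtain ⟨a, ha0, rfl⟩ : ∃ a : ℝ, 0 ≤ a ∧ x = 1 + a ^ 2 :=
      ⟨Real.sqrt (x - 1), Real.sqrt_nonneg _, by rw [Real.sq_sqrt (by linarith)]; ring⟩
    have hEx : 0 ≤ exp (1 + a ^ 2) -
        (1 + (1 + a ^ 2) + (1 + a ^ 2) ^ 2 / 2 + (1 + a ^ 2) ^ 3 / 6) := by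
      have := exp_lb3 (x := 1 + a ^ 2) (by positivity)
      linarith
    obtain ⟨b, hb0, hEb⟩ : ∃ b : ℝ, 0 ≤ b ∧ exp (1 + a ^ 2) =
        (1 + (1 + a ^ 2) + (1 + a ^ 2) ^ 2 / 2 + (1 + a ^ 2) ^ 3 / 6) + b ^ 2 :=
      ⟨Real.sqrt _, Real.sqrt_nonneg _, by rw [Real.sq_sqrt hEx]; ring⟩
    rw [hEb]
    nlinarith [keyA a b]
  · -- regime 0 < x < 1
    have hu0 : 0 ≤ exp x - (1 + x + x ^ 2 / 2 + x ^ 3 / 6 + x ^ 4 / 24) := by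
      have := exp_lb4 hx.le; linarith
    have hu1 : exp x - (1 + x + x ^ 2 / 2 + x ^ 3 / 6 + x ^ 4 / 24) ≤ x ^ 5 / 100 := by
      have := exp_ub4 hx.le hx1.le; linarith
    set u : ℝ := exp x - (1 + x + x ^ 2 / 2 + x ^ 3 / 6 + x ^ 4 / 24) with hu_def
    have hx1' : x ≤ 1 := hx1.le
    have hPhi : (0:ℝ) ≤ (20 : ℝ) * u ^ 3 +
        (18 : ℝ) * u ^ 4 +
        (2 : ℝ) * u ^ 5 +
        (36 : ℝ) * x * u ^ 2 +
        (36 : ℝ) * x * u ^ 3 +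
        (1 : ℝ) * x * u ^ 6 +
        (18 : ℝ) * x ^ 2 * u +
        (45 : ℝ) * x ^ 2 * u ^ 2 +
        (3 : ℝ) * x ^ 2 * u ^ 5 +
        (32 : ℝ) * x ^ 3 * u +
        (19 : ℝ) * x ^ 3 * u ^ 2 +
        (2 : ℝ) * x ^ 3 * u ^ 5 +
        (8 : ℝ) * x ^ 4 +
        (26 : ℝ) * x ^ 4 * u +
        (5 : ℝ) * x ^ 4 * u ^ 4 +
        (3/4 : ℝ) * x ^ 4 * u ^ 5 +
        (10 : ℝ) * x ^ 5 +
        (8 : ℝ) * x ^ 5 * u +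
        (55/12 : ℝ) * x ^ 5 * u ^ 4 +
        (1/4 : ℝ) * x ^ 5 * u ^ 5 +
        (22/3 : ℝ) * x ^ 6 +
        (133/18 : ℝ) * x ^ 6 * u ^ 3 +
        (65/24 : ℝ) * x ^ 6 * u ^ 4 +
        (35/12 : ℝ) * x ^ 7 +
        (7/4 : ℝ) * x ^ 7 * u ^ 2 +
        (65/9 : ℝ) * x ^ 7 * u ^ 3 +
        (5/6 : ℝ) * x ^ 7 * u ^ 4 +
        (1/24 : ℝ) * x ^ 8 +
        (169/24 : ℝ) * x ^ 8 * u ^ 2 +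
        (595/144 : ℝ) * x ^ 8 * u ^ 3 +
        (35/192 : ℝ) * x ^ 8 * u ^ 4 +
        (95/48 : ℝ) * x ^ 9 * u +
        (5561/864 : ℝ) * x ^ 9 * u ^ 2 +
        (355/216 : ℝ) * x ^ 9 * u ^ 3 +
        (5/192 : ℝ) * x ^ 9 * u ^ 4 +
        (53/576 : ℝ) * x ^ 10 +
        (15/4 : ℝ) * x ^ 10 * u +
        (413/108 : ℝ) * x ^ 10 * u ^ 2 +
        (425/864 : ℝ) * x ^ 10 * u ^ 3 +
        (1237/1728 : ℝ) * x ^ 11 +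
        (2773/864 : ℝ) * x ^ 11 * u +
        (245/144 : ℝ) * x ^ 11 * u ^ 2 +
        (5/48 : ℝ) * x ^ 11 * u ^ 3 +
        (3037/3456 : ℝ) * x ^ 12 +
        (10081/5184 : ℝ) * x ^ 12 * u +
        (1025/1728 : ℝ) * x ^ 12 * u ^ 2 +
        (55/3456 : ℝ) * x ^ 12 * u ^ 3 +
        (301/432 : ℝ) * x ^ 13 +
        (3193/3456 : ℝ) * x ^ 13 * u +
        (565/3456 : ℝ) * x ^ 13 * u ^ 2 +
        (5/3456 : ℝ) * x ^ 13 * u ^ 3 +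
        (1097/2592 : ℝ) * x ^ 14 +
        (3703/10368 : ℝ) * x ^ 14 * u +
        (245/6912 : ℝ) * x ^ 14 * u ^ 2 +
        (13027/62208 : ℝ) * x ^ 15 +
        (197/1728 : ℝ) * x ^ 15 * u +
        (5/864 : ℝ) * x ^ 15 * u ^ 2 +
        (43205/497664 : ℝ) * x ^ 16 +
        (4993/165888 : ℝ) * x ^ 16 * u +
        (25/36864 : ℝ) * x ^ 16 * u ^ 2 +
        (30425/995328 : ℝ) * x ^ 17 +
        (5/768 : ℝ) * x ^ 17 * u +
        (5/110592 : ℝ) * x ^ 17 * u ^ 2 +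
        (13711/1492992 : ℝ) * x ^ 18 +
        (125/110592 : ℝ) * x ^ 18 * u +
        (3509/1492992 : ℝ) * x ^ 19 +
        (25/165888 : ℝ) * x ^ 19 * u +
        (253/497664 : ℝ) * x ^ 20 +
        (19/1327104 : ℝ) * x ^ 20 * u +
        (1093/11943936 : ℝ) * x ^ 21 +
        (1/1327104 : ℝ) * x ^ 21 * u +
        (319/23887872 : ℝ) * x ^ 22 +
        (1/663552 : ℝ) * x ^ 23 +
        (23/191102976 : ℝ) * x ^ 24 +
        (1/191102976 : ℝ) * x ^ 25 := by
      have h := keyB (Real.sqrt x) (Real.sqrt u)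
      rw [Real.sq_sqrt hx.le, Real.sq_sqrt hu0] at h
      linarith [h]
    have hx9 : x ^ 9 ≤ x ^ 3 := pow_le_pow_of_le_one hx.le hx1.le (by norm_num)
    have hx3 : 0 < x ^ 3 := by positivity
    have hexp : exp x = (1 + x + x ^ 2 / 2 + x ^ 3 / 6 + x ^ 4 / 24) + u := by
      rw [hu_def]; ring
    have hm0 : x ^ 0 * u ^ 6 ≤ x ^ 3 / 100 ^ 6 := pow_bound hx.le hx1' hu0 hu1 0 6 (by norm_num)
    have hm1 : x ^ 1 * u ^ 4 ≤ x ^ 3 / 100 ^ 4 := pow_bound hx.le hx1' hu0 hu1 1 4 (by norm_num)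
    have hm2 : x ^ 1 * u ^ 5 ≤ x ^ 3 / 100 ^ 5 := pow_bound hx.le hx1' hu0 hu1 1 5 (by norm_num)
    have hm3 : x ^ 2 * u ^ 3 ≤ x ^ 3 / 100 ^ 3 := pow_bound hx.le hx1' hu0 hu1 2 3 (by norm_num)
    have hm4 : x ^ 2 * u ^ 4 ≤ x ^ 3 / 100 ^ 4 := pow_bound hx.le hx1' hu0 hu1 2 4 (by norm_num)
    have hm5 : x ^ 3 * u ^ 3 ≤ x ^ 3 / 100 ^ 3 := pow_bound hx.le hx1' hu0 hu1 3 3 (by norm_num)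
    have hm6 : x ^ 3 * u ^ 4 ≤ x ^ 3 / 100 ^ 4 := pow_bound hx.le hx1' hu0 hu1 3 4 (by norm_num)
    have hm7 : x ^ 4 * u ^ 2 ≤ x ^ 3 / 100 ^ 2 := pow_bound hx.le hx1' hu0 hu1 4 2 (by norm_num)
    have hm8 : x ^ 4 * u ^ 3 ≤ x ^ 3 / 100 ^ 3 := pow_bound hx.le hx1' hu0 hu1 4 3 (by norm_num)
    have hm9 : x ^ 5 * u ^ 2 ≤ x ^ 3 / 100 ^ 2 := pow_bound hx.le hx1' hu0 hu1 5 2 (by norm_num)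
    have hm10 : x ^ 5 * u ^ 3 ≤ x ^ 3 / 100 ^ 3 := pow_bound hx.le hx1' hu0 hu1 5 3 (by norm_num)
    have hm11 : x ^ 6 * u ^ 1 ≤ x ^ 3 / 100 ^ 1 := pow_bound hx.le hx1' hu0 hu1 6 1 (by norm_num)
    have hm12 : x ^ 6 * u ^ 2 ≤ x ^ 3 / 100 ^ 2 := pow_bound hx.le hx1' hu0 hu1 6 2 (by norm_num)
    have hm13 : x ^ 7 * u ^ 1 ≤ x ^ 3 / 100 ^ 1 := pow_bound hx.le hx1' hu0 hu1 7 1 (by norm_num)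
    have hm14 : x ^ 8 * u ^ 1 ≤ x ^ 3 / 100 ^ 1 := pow_bound hx.le hx1' hu0 hu1 8 1 (by norm_num)
    rw [hexp]
    linarith [hPhi, hx9, hx3, hm0, hm1, hm2, hm3, hm4, hm5, hm6, hm7, hm8, hm9, hm10, hm11, hm12, hm13, hm14]

end RatioAux

namespace RatioAux

/-! ### Derivatives -/

lemma exp_two_mul_eq (x : ℝ) : exp (2 * x) = exp x * exp x := by
  rw [two_mul, Real.exp_add]

lemma hasDerivAt_Rone (x : ℝ) :
    HasDerivAt Rone (3 * exp x ^ 3 - (2 + x) * exp x) x := by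
  have hE := Real.hasDerivAt_exp x
  have h2 : HasDerivAt (fun y : ℝ => exp (2 * y)) (2 * exp (2 * x)) x := by
    have := ((hasDerivAt_id x).const_mul 2).exp
    simpa [mul_comm] using this
  have h3 : HasDerivAt (fun y : ℝ => exp (2 * y) - y - 1) (2 * exp (2 * x) - 1) x := by
    simpa using (h2.sub (hasDerivAt_id x)).sub_const 1
  have h4 := hE.mul h3
  have : HasDerivAt Rone (exp x * (exp (2 * x) - x - 1) + exp x * (2 * exp (2 * x) - 1)) x := h4
  convert this using 1
  rw [exp_two_mul_eq]; ring

lemma hasDerivAt_Rtwo (x : ℝ) :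
    HasDerivAt Rtwo (3 * exp x ^ 3 - (3 + 2 * x) * exp x ^ 2 + x * exp x) x := by
  have hE := Real.hasDerivAt_exp x
  have h1 : HasDerivAt (fun y : ℝ => exp y - y - 1) (exp x - 1 - 1 + 1) x := by
    simpa using (hE.sub (hasDerivAt_id x)).sub_const 1
  have h1' : HasDerivAt (fun y : ℝ => exp y - y - 1) (exp x - 1) x := by
    convert h1 using 1; ring
  have h2 := hE.mul h1'
  have h3 : HasDerivAt (fun y : ℝ => exp y - 1) (exp x) x := by
    simpa using hE.sub_const 1
  have h4 := (h2.add h3).mul h3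
  have : HasDerivAt Rtwo
      ((exp x * (exp x - x - 1) + exp x * (exp x - 1) + exp x) * (exp x - 1)
        + (exp x * (exp x - x - 1) + (exp x - 1)) * exp x) x := h4
  convert this using 1
  ring

/-- first-derivative numerator `P1 x = exp x * Q1 x`. -/
noncomputable def P1 (x : ℝ) : ℝ :=
  exp x * (x * exp x ^ 4 + (2 - 4 * x) * exp x ^ 3 + (x ^ 2 + 2 * x - 2) * exp x ^ 2
    - 2 * exp x + (x + 2))

lemma hasDerivAt_P1 (x : ℝ) :
    HasDerivAt P1
      (3 * exp x + x * exp x - 4 * exp x ^ 2 - 4 * exp x ^ 3 + 8 * x * exp x ^ 3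
        + 3 * x ^ 2 * exp x ^ 3 + 4 * exp x ^ 4 - 16 * x * exp x ^ 4 + exp x ^ 5
        + 5 * x * exp x ^ 5) x := by
  have hE := Real.hasDerivAt_exp x
  have t1 : HasDerivAt (fun y : ℝ => y * exp y ^ 4)
      (1 * exp x ^ 4 + x * ((4 : ℕ) * exp x ^ 3 * exp x)) x :=
    (hasDerivAt_id x).mul (hE.pow 4)
  have c2 : HasDerivAt (fun y : ℝ => 2 - 4 * y) (0 - 4 * 1) x :=
    (hasDerivAt_const x (2:ℝ)).sub ((hasDerivAt_id x).const_mul 4)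
  have t2 : HasDerivAt (fun y : ℝ => (2 - 4 * y) * exp y ^ 3)
      ((0 - 4 * 1) * exp x ^ 3 + (2 - 4 * x) * ((3 : ℕ) * exp x ^ 2 * exp x)) x :=
    c2.mul (hE.pow 3)
  have c3 : HasDerivAt (fun y : ℝ => y ^ 2 + 2 * y - 2) ((2 : ℕ) * x ^ 1 + 2 * 1 - 0) x :=
    (((hasDerivAt_pow 2 x).add ((hasDerivAt_id x).const_mul 2)).sub (hasDerivAt_const x 2))
  have t3 : HasDerivAt (fun y : ℝ => (y ^ 2 + 2 * y - 2) * exp y ^ 2)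
      (((2 : ℕ) * x ^ 1 + 2 * 1 - 0) * exp x ^ 2
        + (x ^ 2 + 2 * x - 2) * ((2 : ℕ) * exp x ^ 1 * exp x)) x :=
    c3.mul (hE.pow 2)
  have t4 : HasDerivAt (fun y : ℝ => 2 * exp y) (2 * exp x) x := hE.const_mul 2
  have t5 : HasDerivAt (fun y : ℝ => y + 2) (1 + 0) x :=
    (hasDerivAt_id x).add (hasDerivAt_const x 2)
  have hq := (((t1.add t2).add t3).sub t4).add t5
  have h := hE.mul hq
  refine h.congr_deriv (Eq.symm ?_)
  push_cast
  simp only [Pi.add_apply, Pi.sub_apply]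
  ring

/-! ### derivative of the ratio on `(0,∞)` -/

lemma hasDerivAt_ratio {x : ℝ} (hx : 0 < x) :
    HasDerivAt (fun y => Rtwo y / Rone y) (P1 x / Rone x ^ 2) x := by
  have h := (hasDerivAt_Rtwo x).div (hasDerivAt_Rone x) (Rone_pos hx).ne'
  refine h.congr_deriv (Eq.symm ?_)
  have hr : Rone x = exp x * (exp x * exp x - x - 1) := by
    rw [Rone, exp_two_mul_eq]
  rw [P1, hr, Rtwo]
  ring

lemma deriv_ratio {x : ℝ} (hx : 0 < x) :
    deriv (fun y => Rtwo y / Rone y) x = P1 x / Rone x ^ 2 :=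
  (hasDerivAt_ratio hx).deriv

lemma hasDerivAt_g {x : ℝ} (hx : 0 < x) :
    HasDerivAt (fun y => P1 y / Rone y ^ 2)
      ((exp x ^ 2 * ((5 + 4 * x + x ^ 2) - 4 * exp x
          + (-13 - 5 * x - 3 * x ^ 2 - x ^ 3) * exp x ^ 2
          + (12 + 8 * x ^ 2) * exp x ^ 3 + (7 - 6 * x - 6 * x ^ 2) * exp x ^ 4
          + (-8 + 8 * x) * exp x ^ 5 + (1 - x) * exp x ^ 6)) / Rone x ^ 3) x := by
  have hden : HasDerivAt (fun y => Rone y ^ 2)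
      ((2 : ℕ) * Rone x ^ 1 * (3 * exp x ^ 3 - (2 + x) * exp x)) x :=
    (hasDerivAt_Rone x).pow 2
  have h := (hasDerivAt_P1 x).div hden (pow_ne_zero 2 (Rone_pos hx).ne')
  refine h.congr_deriv (Eq.symm ?_)
  have hR : Rone x = exp x * (exp x * exp x - x - 1) := by rw [Rone, exp_two_mul_eq]
  have hRne : Rone x ≠ 0 := (Rone_pos hx).ne'
  rw [div_eq_div_iff (pow_ne_zero 3 hRne) (pow_ne_zero 2 (pow_ne_zero 2 hRne))]
  rw [P1, hR]
  push_cast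
  ring

end RatioAux

open RatioAux

/-- `R⁽¹⁾` and `R⁽²⁾` are positive on `(0,∞)`, and their ratio
`h = R⁽²⁾/R⁽¹⁾` is strictly increasing and strictly concave on `(0,∞)`, with
`h(x) → 0` as `x → 0+` and `h(x) → 1` as `x → ∞`. -/
theorem ratio_properties :
    (∀ x > (0 : ℝ), 0 < Rone x) ∧
    (∀ x > (0 : ℝ), 0 < Rtwo x) ∧
    StrictMonoOn (fun x => Rtwo x / Rone x) (Set.Ioi (0 : ℝ)) ∧
    StrictConcaveOn ℝ (Set.Ioi (0 : ℝ)) (fun x => Rtwo x / Rone x) ∧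
    Tendsto (fun x => Rtwo x / Rone x) (nhdsWithin 0 (Set.Ioi 0)) (nhds 0) ∧
    Tendsto (fun x => Rtwo x / Rone x) atTop (nhds 1) := by
  have hcontR1 : Continuous Rone := by unfold Rone; continuity
  have hcontR2 : Continuous Rtwo := by unfold Rtwo; continuity
  have hcont : ContinuousOn (fun x => Rtwo x / Rone x) (Set.Ioi (0:ℝ)) :=
    hcontR2.continuousOn.div hcontR1.continuousOn
      (fun x hx => (Rone_pos hx).ne')
  refine ⟨fun x hx => Rone_pos hx, fun x hx => Rtwo_pos hx, ?_, ?_, ?_, ?_⟩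
  · -- strictly monotone
    apply strictMonoOn_of_deriv_pos (convex_Ioi 0) hcont
    intro x hx
    rw [interior_Ioi] at hx
    rw [deriv_ratio hx]
    apply div_pos _ (pow_pos (Rone_pos hx) 2)
    rw [P1]
    exact mul_pos (exp_pos x) (Q1_pos hx)
  · -- strictly concave
    apply strictConcaveOn_of_deriv2_neg (convex_Ioi 0) hcont
    intro x hx
    rw [interior_Ioi] at hx
    have h2 : deriv^[2] (fun x => Rtwo x / Rone x) x
        = deriv (deriv (fun x => Rtwo x / Rone x)) x := by
      simp [Function.iterate_succ_apply']
    rw [h2]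
    have hev : deriv (fun y => Rtwo y / Rone y) =ᶠ[nhds x] (fun y => P1 y / Rone y ^ 2) := by
      filter_upwards [isOpen_Ioi.mem_nhds hx] with y hy
      exact deriv_ratio hy
    rw [hev.deriv_eq, (hasDerivAt_g hx).deriv]
    apply div_neg_of_neg_of_pos
    · exact mul_neg_of_pos_of_neg (by positivity) (Q2_neg hx)
    · exact pow_pos (Rone_pos hx) 3
  · -- limit at 0⁺
    have hR2 : HasDerivAt Rtwo 0 0 := by
      have h := hasDerivAt_Rtwo 0
      convert h using 1
      norm_num
    have hR1 : HasDerivAt Rone 1 0 := by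
      have h := hasDerivAt_Rone 0
      convert h using 1
      norm_num
    have hs2 : Tendsto (slope Rtwo 0) (nhdsWithin 0 (Set.Ioi 0)) (nhds 0) :=
      (hasDerivAt_iff_tendsto_slope.mp hR2).mono_left
        (nhdsWithin_mono 0 (fun y hy => ne_of_gt hy))
    have hs1 : Tendsto (slope Rone 0) (nhdsWithin 0 (Set.Ioi 0)) (nhds 1) :=
      (hasDerivAt_iff_tendsto_slope.mp hR1).mono_left
        (nhdsWithin_mono 0 (fun y hy => ne_of_gt hy))
    have hdiv := hs2.div hs1 one_ne_zero
    rw [zero_div] at hdiv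
    apply hdiv.congr'
    filter_upwards [self_mem_nhdsWithin] with y hy
    have hy0 : (y:ℝ) ≠ 0 := ne_of_gt hy
    have hRtwo0 : Rtwo 0 = 0 := by simp [Rtwo]
    have hRone0 : Rone 0 = 0 := by simp [Rone]
    have h1 : Rone y ≠ 0 := (Rone_pos hy).ne'
    simp only [Pi.div_apply]
    rw [slope_def_field, slope_def_field, hRtwo0, hRone0, sub_zero, sub_zero, sub_zero]
    field_simp
  · -- limit at ∞
    have l2 : Tendsto (fun x : ℝ => exp (-x)) atTop (nhds 0) :=
      Real.tendsto_exp_neg_atTop_nhds_zero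
    have l1 : Tendsto (fun x : ℝ => x * exp (-x)) atTop (nhds 0) := by
      simpa using Real.tendsto_pow_mul_exp_neg_atTop_nhds_zero 1
    have hNum : Tendsto
        (fun x : ℝ => (1 - x * exp (-x) - exp (-x) * exp (-x)) * (1 - exp (-x)))
        atTop (nhds 1) := by
      have h := (((tendsto_const_nhds (x := (1:ℝ))).sub l1).sub (l2.mul l2)).mul
        ((tendsto_const_nhds (x := (1:ℝ))).sub l2)
      rw [show ((1:ℝ) - 0 - 0 * 0) * (1 - 0) = 1 by norm_num] at h
      exact h
    have hDen : Tendsto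
        (fun x : ℝ => 1 - (x * exp (-x) * exp (-x) + exp (-x) * exp (-x)))
        atTop (nhds 1) := by
      have h := (tendsto_const_nhds (x := (1:ℝ))).sub ((l1.mul l2).add (l2.mul l2))
      rw [show (1:ℝ) - (0 * 0 + 0 * 0) = 1 by norm_num] at h
      exact h
    have hlim := hNum.div hDen one_ne_zero
    rw [show (1:ℝ) / 1 = 1 by norm_num] at hlim
    apply hlim.congr'
    filter_upwards [eventually_gt_atTop (0:ℝ)] with x hx
    have hE : exp x ≠ 0 := (exp_pos x).ne'
    have hRone : Rone x ≠ 0 := (Rone_pos hx).ne'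
    have hr : Rone x = exp x * (exp x * exp x - x - 1) := by rw [Rone, exp_two_mul_eq]
    simp only [Pi.div_apply]
    have hden_eq : (1 : ℝ) - (x * exp (-x) * exp (-x) + exp (-x) * exp (-x))
        = Rone x / exp x ^ 3 := by
      rw [Real.exp_neg, hr]
      field_simp
      ring
    have hDenne : (1 : ℝ) - (x * exp (-x) * exp (-x) + exp (-x) * exp (-x)) ≠ 0 := by
      rw [hden_eq]
      exact div_ne_zero hRone (by positivity)
    rw [div_eq_div_iff hDenne hRone, Rtwo, hr, Real.exp_neg]
    field_simp
    ring
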